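/- Let A, B be strings of lengths m and n, σ a character, K' the all scores matrix of σA and B, and Diff = K' − K. Assume every row of K□ contains at most one nonzero entry and every nonzero entry of K□ equals 1. Then for all 0 ≤ i ≤ j ≤ n, if Diff[i,j] = 1 then Diff[i,j'] = 1 for every j' with j ≤ j' ≤ n. -/
import Mathlib


variable {α : Type*}

/-- LCS of two lists: the maximum length of a common sublist. -/
noncomputable def LCS (X Y : List α) : ℕ :=
  sSup {k | ∃ Z : List α, Z.length = k ∧ Z.Sublist X ∧ Z.Sublist Y}

/-- `substr S i j` is S[i..j]: the characters of S at (1-based) positions i+1,…,j. -/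
def substr (S : List α) (i j : ℕ) : List α := (S.take j).drop i

/-- The density matrix D□ of a matrix D. -/
def density (D : ℕ → ℕ → ℤ) (i j : ℕ) : ℤ :=
  D i j + D (i - 1) (j - 1) - D (i - 1) j - D i (j - 1)

/-- The all scores matrix K of A and B: K[i,j] = LCS(B[i..j], A) if i ≤ j, else j - i. -/
noncomputable def Kmat (A B : List α) (i j : ℕ) : ℤ :=
  if i ≤ j then (LCS (substr B i j) A : ℤ) else (j : ℤ) - (i : ℤ)

/-- The all scores matrix P of A and B: P[i,j] = LCS(B[i..n], A[0..j]). -/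
noncomputable def Pmat (A B : List α) (i j : ℕ) : ℤ :=
  (LCS (substr B i B.length) (substr A 0 j) : ℤ)

/-- nextmatch(i,σ,B): minimum (1-based) position i' with i < i' ≤ |B| and B[i'] = σ; ⊤ (∞) if none. -/
noncomputable def nextmatch (i : ℕ) (σ : α) (B : List α) : ℕ∞ :=
  sInf {k : ℕ∞ | ∃ k' : ℕ, k = (k' : ℕ∞) ∧ i < k' ∧ k' ≤ B.length ∧ B[k' - 1]? = some σ}

/-- prevmatch(j,σ,B): maximum (1-based) position i' with 1 ≤ i' ≤ j and B[i'] = σ; ⊥ (−∞) if none. -/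
noncomputable def prevmatch (j : ℕ) (σ : α) (B : List α) : WithBot ℕ :=
  sSup {k : WithBot ℕ | ∃ k' : ℕ, k = (k' : WithBot ℕ) ∧ 1 ≤ k' ∧ k' ≤ j ∧ B[k' - 1]? = some σ}

/- ### Auxiliary lemmas -/

lemma lcs_bddAbove (X Y : List α) :
    BddAbove {k | ∃ Z : List α, Z.length = k ∧ Z.Sublist X ∧ Z.Sublist Y} :=
  ⟨X.length, fun _k ⟨Z, hZ, hX, _⟩ => hZ ▸ hX.length_le⟩

lemma length_le_LCS {X Y Z : List α} (hX : Z.Sublist X) (hY : Z.Sublist Y) :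
    Z.length ≤ LCS X Y :=
  le_csSup (lcs_bddAbove X Y) ⟨Z, rfl, hX, hY⟩

lemma exists_lcs (X Y : List α) :
    ∃ Z : List α, Z.length = LCS X Y ∧ Z.Sublist X ∧ Z.Sublist Y := by
  have h := Nat.sSup_mem (s := {k | ∃ Z : List α, Z.length = k ∧ Z.Sublist X ∧ Z.Sublist Y})
    ⟨0, ⟨[], rfl, List.nil_sublist _, List.nil_sublist _⟩⟩ (lcs_bddAbove X Y)
  exact h

lemma LCS_mono {X X' Y Y' : List α} (h1 : X.Sublist X') (h2 : Y.Sublist Y') :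
    LCS X Y ≤ LCS X' Y' := by
  obtain ⟨Z, hlen, hX, hY⟩ := exists_lcs X Y
  exact hlen ▸ length_le_LCS (hX.trans h1) (hY.trans h2)

lemma LCS_cons_le (X A : List α) (σ : α) : LCS X (σ :: A) ≤ LCS X A + 1 := by
  obtain ⟨Z, hlen, hX, hA⟩ := exists_lcs X (σ :: A)
  rcases List.sublist_cons_iff.mp hA with h | ⟨r, rfl, hr⟩
  · exact hlen ▸ le_trans (length_le_LCS hX h) (Nat.le_succ _)
  · have : r.length ≤ LCS X A :=
      length_le_LCS (List.sublist_of_cons_sublist hX) hr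
    simp only [List.length_cons] at hlen
    omega

lemma substr_append {B : List α} {i j j' : ℕ} (h1 : i ≤ j) (h2 : j ≤ j')
    (h3 : j ≤ B.length) : substr B i j' = substr B i j ++ substr B j j' := by
  unfold substr
  have h4 : (B.take j').take j = B.take j := by
    rw [List.take_take, Nat.min_eq_left h2]
  conv_lhs => rw [← List.take_append_drop j (B.take j')]
  rw [List.drop_append_of_le_length, h4]
  rw [h4, List.length_take]
  omega

lemma substr_drop {B : List α} {i p j : ℕ} (h : i ≤ p) :
    substr B p j = (substr B i j).drop (p - i) := by
  unfold substr
  rw [List.drop_drop]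
  congr 1
  omega

lemma substr_sublist {B : List α} {i p j : ℕ} (h : i ≤ p) :
    (substr B p j).Sublist (substr B i j) := by
  rw [substr_drop h]
  exact List.drop_sublist _ _

lemma substr_length {B : List α} {i j : ℕ} (h2 : j ≤ B.length) :
    (substr B i j).length = j - i := by
  unfold substr
  rw [List.length_drop, List.length_take]
  omega

/-- if Diff[i,j] = 1 then Diff[i,j'] = 1 for all j ≤ j' ≤ n. -/
theorem stmt_7 {α : Type*} (A B : List α) (m n : ℕ)
    (hA : A.length = m) (hB : B.length = n) (σ : α)
    (hRow : ∀ i, 1 ≤ i → i ≤ n → ∀ j₁ j₂, 1 ≤ j₁ → j₁ ≤ n → 1 ≤ j₂ → j₂ ≤ n →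
      density (Kmat A B) i j₁ ≠ 0 → density (Kmat A B) i j₂ ≠ 0 → j₁ = j₂)
    (hVal : ∀ i, 1 ≤ i → i ≤ n → ∀ j, 1 ≤ j → j ≤ n →
      density (Kmat A B) i j ≠ 0 → density (Kmat A B) i j = 1) :
    ∀ i j : ℕ, i ≤ j → j ≤ n →
      Kmat (σ :: A) B i j - Kmat A B i j = 1 →
      ∀ j', j ≤ j' → j' ≤ n → Kmat (σ :: A) B i j' - Kmat A B i j' = 1 := by
  -- nonnegativity of density entries
  have hdens : ∀ r c, 1 ≤ r → r ≤ n → 1 ≤ c → c ≤ n → 0 ≤ density (Kmat A B) r c := by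
    intro r c hr1 hr2 hc1 hc2
    by_cases h : density (Kmat A B) r c = 0
    · omega
    · have := hVal r hr1 hr2 c hc1 hc2 h; omega
  set K : ℕ → ℕ → ℤ := Kmat A B with hK
  -- monotonicity of K in the row index
  have hKmono : ∀ i p c : ℕ, i ≤ p → p ≤ c → K p c ≤ K i c := by
    intro i p c h1 h2
    rw [hK, Kmat, Kmat, if_pos h2, if_pos (le_trans h1 h2)]
    exact_mod_cast LCS_mono (substr_sublist h1) (List.Sublist.refl A)
  -- step: row differences are antitone in the column, one column at a time
  have hstep : ∀ i p : ℕ, i ≤ p → p ≤ n → ∀ c, p < c → c ≤ n →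
      K i c - K p c ≤ K i (c - 1) - K p (c - 1) := by
    intro i p hip
    induction p, hip using Nat.le_induction with
    | base => intro _ c _ _; omega
    | succ p hip ih =>
      intro hpn c hpc hcn
      have h1 : K i c - K p c ≤ K i (c - 1) - K p (c - 1) :=
        ih (by omega) c (by omega) hcn
      have h2 : 0 ≤ density K (p + 1) c :=
        hdens (p + 1) c (by omega) hpn (by omega) hcn
      rw [density] at h2
      simp only [Nat.add_sub_cancel] at h2
      omega
  -- row differences are antitone in the column
  have hmono : ∀ i p : ℕ, i ≤ p → p ≤ n → ∀ j j' : ℕ, p ≤ j → j ≤ j' → j' ≤ n →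
      K i j' - K p j' ≤ K i j - K p j := by
    intro i p hip hpn j j' hpj hjj'
    induction j', hjj' using Nat.le_induction with
    | base => intro _; omega
    | succ j' hjj' ih =>
      intro hj'n
      have h1 := ih (by omega)
      have h2 : K i (j' + 1) - K p (j' + 1) ≤ K i j' - K p j' := by
        have := hstep i p hip hpn (j' + 1) (by omega) hj'n
        simpa using this
      omega
  intro i j hij hjn hdiff j' hjj' hj'n
  have hij' : i ≤ j' := le_trans hij hjj'
  rw [hK, Kmat, Kmat, if_pos hij, if_pos hij] at hdiff
  rw [hK, Kmat, Kmat, if_pos hij', if_pos hij']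
  -- extract the witness for Diff[i,j] = 1
  have hKK : LCS (substr B i j) (σ :: A) = LCS (substr B i j) A + 1 := by omega
  obtain ⟨Z, hZlen, hZB, hZA⟩ := exists_lcs (substr B i j) (σ :: A)
  rcases List.sublist_cons_iff.mp hZA with h | ⟨Z', rfl, hZ'A⟩
  · exfalso
    have := length_le_LCS hZB h
    omega
  -- decompose substr B i j around an occurrence of σ
  obtain ⟨r₁, r₂, hsplit, hmem, hZ'r₂⟩ := List.cons_sublist_iff.mp hZB
  obtain ⟨s, t, rfl⟩ := List.append_of_mem hmem
  set p : ℕ := i + s.length + 1 with hp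
  have hsplit' : substr B i j = (s ++ [σ]) ++ (t ++ r₂) := by
    rw [hsplit]; simp
  have hjB : j ≤ B.length := by omega
  have hlen : (substr B i j).length = j - i := substr_length hjB
  have hpj : p ≤ j := by
    rw [hsplit'] at hlen
    simp at hlen
    omega
  have hip : i < p := by omega
  have hr₂ : t ++ r₂ = substr B p j := by
    have h1 : (substr B i j).drop (s.length + 1) = t ++ r₂ := by
      rw [hsplit', List.drop_left' (by simp)]
    rw [← h1, substr_drop (le_of_lt hip)]
    congr 1
    omega
  -- K p j = K i j
  have hZ'len : Z'.length + 1 = LCS (substr B i j) A + 1 := by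
    simpa using hZlen.trans hKK
  have hKpj_ge : LCS (substr B i j) A ≤ LCS (substr B p j) A := by
    have hZ'sub : Z'.Sublist (substr B p j) :=
      hr₂ ▸ hZ'r₂.trans (List.sublist_append_right t r₂)
    have := length_le_LCS hZ'sub hZ'A
    omega
  have hKpj : K p j = K i j := by
    have h1 := hKmono i p j (le_of_lt hip) hpj
    rw [hK, Kmat, Kmat, if_pos hpj, if_pos hij]
    rw [hK, Kmat, Kmat, if_pos hpj, if_pos hij] at h1
    exact_mod_cast le_antisymm h1 (by exact_mod_cast hKpj_ge)
  -- hence K p j' = K i j'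
  have hpj' : p ≤ j' := le_trans hpj hjj'
  have hKpj' : K p j' = K i j' := by
    have h1 := hmono i p (le_of_lt hip) (le_trans hpj hjn) j j' hpj hjj' hj'n
    have h2 := hKmono i p j' (le_of_lt hip) hpj'
    omega
  -- lower bound: LCS (substr B i j') (σ :: A) ≥ LCS (substr B i j') A + 1
  obtain ⟨W, hWlen, hWB, hWA⟩ := exists_lcs (substr B p j') A
  have hWfull : (σ :: W).Sublist (substr B i j') := by
    have hsplit2 : substr B i j' = (s ++ [σ]) ++ substr B p j' := by
      rw [substr_append hij hjj' hjB, hsplit', hr₂, List.append_assoc]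
      congr 1
      rw [substr_append hpj hjj' hjB]
    rw [hsplit2, List.append_assoc]
    have h1 : (σ :: W).Sublist ([σ] ++ substr B p j') := List.cons_sublist_cons.mpr hWB
    exact h1.trans (List.sublist_append_right s _)
  have hlow : LCS (substr B p j') A + 1 ≤ LCS (substr B i j') (σ :: A) := by
    have := length_le_LCS hWfull (List.cons_sublist_cons.mpr hWA)
    simp only [List.length_cons, hWlen] at this
    omega
  have hup : LCS (substr B i j') (σ :: A) ≤ LCS (substr B i j') A + 1 :=
    LCS_cons_le _ _ _
  -- conclude
  have hKpj'' : (LCS (substr B p j') A : ℤ) = LCS (substr B i j') A := by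
    have := hKpj'
    rw [hK, Kmat, Kmat, if_pos hpj', if_pos hij'] at this
    exact_mod_cast this
  have : (LCS (substr B p j') A : ℕ) = LCS (substr B i j') A := by exact_mod_cast hKpj''
  omega
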